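/- arXiv:math/0505039 — 3 statements merged into one kernel-verified Lean document; each statement's English description precedes it below -/
import Mathlib

section
/- Consider the fast growth surface: heights η'_t : ℤ → ℕ with η'₀ ≡ 0 and η'_{t+1}(x) = η'_t(x) + 1 if b(x, t) = 1 or η'_t(y) > η'_t(x) for some y with |y − x| ≤ 1, and η'_{t+1}(x) = η'_t(x) otherwise. Then for every ε > 0 and r ∈ ℕ there exist p'₀ > 0 and c > 0 such that whenever p' ≤ p'₀, for every admissible field b, every x ∈ ℤ and every t, P(η'_t(x) ≥ εt) ≤ e^{−ct}. -/
open MeasureTheory ProbabilityTheory Filter Topology Set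
open scoped Pointwise ENNReal

noncomputable section

abbrev Pt : Type := EuclideanSpace ℝ (Fin 2)

def mkPt (a b : ℝ) : Pt := (WithLp.equiv 2 (Fin 2 → ℝ)).symm ![a, b]

def toPt (z : ℤ × ℤ) : Pt := mkPt z.1 z.2

def lattice : Set Pt := Set.range toPt

structure CA where
  N : Set Pt
  finite : N.Finite
  subLat : N ⊆ lattice
  zeroMem : (0 : Pt) ∈ N
  negN : -N = N
  rule : Set Pt → Prop
  mono : ∀ ⦃S₁ S₂ : Set Pt⦄, S₁ ⊆ S₂ → rule S₁ → rule S₂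
  notEmpty : ¬ rule ∅
  ruleSymm : ∀ S : Set Pt, rule (-S) ↔ rule S
  solid : ∀ S : Set Pt, (0 : Pt) ∈ S → rule S

def CA.T (c : CA) (A : Set Pt) : Set Pt :=
  {x | x ∈ lattice ∧ c.rule (((fun a => a - x) '' A) ∩ c.N)}

def CA.Tbar (c : CA) (B : Set Pt) : Set Pt :=
  {x | c.rule ((((fun a => a - x) '' B) ∩ lattice) ∩ c.N)}

def Hminus (u : Pt) : Set Pt := {x | (inner ℝ x u : ℝ) ≤ 0}

def shiftSet (v : Pt) (S : Set Pt) : Set Pt := (fun x => x + v) '' S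

def IsSpeed (c : CA) (w : Pt → ℝ) : Prop :=
  ∀ u : Pt, ‖u‖ = 1 → c.Tbar (Hminus u) = shiftSet (w u • u) (Hminus u)

def Supercritical (w : Pt → ℝ) : Prop := ∀ u : Pt, ‖u‖ = 1 → 0 < w u

def FillsSpace (c : CA) (A : Set Pt) : Prop :=
  A ⊆ lattice ∧ ∀ x ∈ lattice, ∃ t : ℕ, x ∈ c.T^[t] A

def LocallyRegular (c : CA) : Prop :=
  ∀ A₀ : Set Pt, A₀.Finite → A₀ ⊆ lattice → ∃ C : ℝ, 0 < C ∧
    ∀ A : ℕ → Set Pt, A 0 = A₀ →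
      (∀ s, A s ⊆ A (s + 1)) → (∀ s, A (s + 1) ⊆ A s ∪ c.T (A s)) →
      ∀ t : ℕ, ∀ x ∈ A t, (∀ y ∈ A₀, C ≤ dist x y) →
        ∃ G : Set Pt, G.Finite ∧ G ⊆ A t ∧ G ⊆ Metric.closedBall x C ∧ FillsSpace c G

structure Perturbation (c : CA) where
  pr : Set Pt → ℝ
  nonneg : ∀ S, 0 ≤ pr S
  le_one : ∀ S, pr S ≤ 1
  mono : ∀ ⦃S₁ S₂ : Set Pt⦄, S₁ ⊆ S₂ → pr S₁ ≤ pr S₂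
  empty : pr ∅ = 0
  prSymm : ∀ S, pr (-S) = pr S
  solid : ∀ S : Set Pt, (0 : Pt) ∈ S → pr S = 1
  p : ℝ
  p_pos : 0 < p
  p_min : ∀ S : Set Pt, S ⊆ c.N → 0 < pr S → p ≤ pr S
  p_attained : ∃ S : Set Pt, S ⊆ c.N ∧ pr S = p
  compat : ∀ S : Set Pt, S ⊆ c.N → (c.rule S ↔ 0 < pr S)

def IsUniformIID {Ω : Type*} [MeasureSpace Ω] (U : ((ℤ × ℤ) × ℕ) → Ω → ℝ) : Prop :=
  (∀ i, Measurable (U i)) ∧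
  iIndepFun U ℙ ∧
  ∀ i, Measure.map (U i) ℙ = volume.restrict (Set.Icc (0 : ℝ) 1)

def IsDyn {Ω : Type*} (c : CA) (P : Perturbation c) (U : ((ℤ × ℤ) × ℕ) → Ω → ℝ)
    (A : ℕ → Ω → Set Pt) : Prop :=
  ∀ ω t, A (t + 1) ω =
    {x | ∃ z : ℤ × ℤ, toPt z = x ∧
      U (z, t) ω ≤ P.pr (((fun a => a - x) '' A t ω) ∩ c.N)}

def IsStdDyn {Ω : Type*} (c : CA) (p : ℝ) (U : ((ℤ × ℤ) × ℕ) → Ω → ℝ)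
    (A : ℕ → Ω → Set Pt) : Prop :=
  ∀ ω t, A (t + 1) ω =
    A t ω ∪ {x | x ∈ c.T (A t ω) ∧ ∃ z : ℤ × ℤ, toPt z = x ∧ U (z, t) ω ≤ p}

def SpeedEvent (u : Pt) (wu ε : ℝ) (t : ℕ) (At : Set Pt) : Prop :=
  shiftSet (((t : ℝ) * (wu - ε)) • u) (Hminus u) ∩ lattice ∩
      Metric.closedBall 0 ((t : ℝ) ^ 2) ⊆ At ∧
  At ∩ Metric.closedBall 0 ((t : ℝ) ^ 2) ⊆
      shiftSet (((t : ℝ) * (wu + ε)) • u) (Hminus u)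

def Lset (w : Pt → ℝ) : Set Pt := {x | ∀ u : Pt, ‖u‖ = 1 → (inner ℝ x u : ℝ) ≤ w u}

def Kset (w : Pt → ℝ) : Set Pt :=
  {x | ∃ u : Pt, ‖u‖ = 1 ∧ ∃ r : ℝ, 0 ≤ r ∧ r ≤ (w u)⁻¹ ∧ x = r • u}

def dKp (w : Pt → ℝ) : Set Pt :=
  frontier (Kset w) ∩ frontier (convexHull ℝ (Kset w))

def lineu (w : Pt → ℝ) (u : Pt) : Set Pt := {x | (inner ℝ x u : ℝ) = -(w u)}

def rot (β : ℝ) (v : Pt) : Pt :=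
  mkPt (Real.cos β * v 0 - Real.sin β * v 1) (Real.sin β * v 0 + Real.cos β * v 1)

def lineSet (q n : Pt) : Set Pt := {x | (inner ℝ (x - q) n : ℝ) = 0}

def farOpen (Nset : Set Pt) (q n : Pt) : Set Pt :=
  {x ∈ Nset | 0 < (inner ℝ (x - q) n : ℝ) * (inner ℝ q n : ℝ)}

def farClosed (Nset : Set Pt) (q n : Pt) : Set Pt :=
  {x ∈ Nset | 0 ≤ (inner ℝ (x - q) n : ℝ) * (inner ℝ q n : ℝ)}

def HasLDSpeed (c : CA) (P : Perturbation c) (wpi : Pt → ℝ) : Prop :=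
  ∀ u : Pt, ‖u‖ = 1 → 0 < wpi u ∧
    ∀ (Ω : Type) [MeasureSpace Ω] [IsProbabilityMeasure (ℙ : Measure Ω)]
      (U : ((ℤ × ℤ) × ℕ) → Ω → ℝ), IsUniformIID U →
      ∀ A : ℕ → Ω → Set Pt, IsDyn c P U A → A 0 = (fun _ => Hminus u ∩ lattice) →
      ∀ ε : ℝ, 0 < ε → ∃ cε : ℝ, 0 < cε ∧ ∀ t : ℕ, 1 ≤ t →
        ENNReal.ofReal (1 - Real.exp (-cε * t)) ≤ ℙ {ω | SpeedEvent u (wpi u) ε t (A t ω)}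

def ext (M : ℤ) (κ : ℝ) (A : Set (ℤ × ℤ)) : Set (ℤ × ℤ) :=
  {q | (0 ≤ q.1 ∧ q.1 ≤ M - 1 ∧ q ∈ A) ∨
       (M ≤ q.1 ∧ q.1 ≤ 2 * M - 1 ∧ (q.1 - M, ⌊(q.2 : ℝ) - κ * M⌋) ∈ A) ∨
       (-M ≤ q.1 ∧ q.1 < 0 ∧ (q.1 + M, ⌊(q.2 : ℝ) + κ * M⌋) ∈ A)}

def IsStripDyn {Ω : Type*} (c : CA) (P : Perturbation c) (M : ℤ) (κ : ℝ)
    (U : ((ℤ × ℤ) × ℕ) → Ω → ℝ) (A : ℕ → Ω → Set (ℤ × ℤ)) : Prop :=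
  ∀ ω t, A (t + 1) ω =
    {q | 0 ≤ q.1 ∧ q.1 ≤ M - 1 ∧
      U (q, t) ω ≤ P.pr ((toPt '' ((fun r => r - q) '' ext M κ (A t ω))) ∩ c.N)}

def hgt1 (A : Set (ℤ × ℤ)) (M : ℤ) (κ : ℝ) : ℝ :=
  sSup {r : ℝ | ∃ q ∈ A, 0 ≤ q.1 ∧ q.1 ≤ M - 1 ∧ r = κ * q.1 + q.2}

def hgt0 (A : Set (ℤ × ℤ)) (M : ℤ) (κ : ℝ) : ℝ :=
  sInf {r : ℝ | ∃ q : ℤ × ℤ, q ∉ A ∧ 0 ≤ q.1 ∧ q.1 ≤ M - 1 ∧ r = κ * q.1 + q.2}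

def boxN (ρ : ℕ) : Finset (ℤ × ℤ) := Finset.Icc (-(ρ : ℤ), -(ρ : ℤ)) ((ρ : ℤ), (ρ : ℤ))

def cutCard (ρ : ℕ) (a b cc : ℝ) : ℕ :=
  ((boxN ρ).filter (fun y => cc ≤ a * y.1 + b * y.2)).card

def lamSet (ρ : ℕ) (x : ℤ × ℤ) : Set ℕ :=
  {n | ∃ a b cc : ℝ, ¬(a = 0 ∧ b = 0) ∧ 0 < cc ∧ a * x.1 + b * x.2 = cc ∧ n = cutCard ρ a b cc}

def lamStar (ρ : ℕ) (x : ℤ × ℤ) : ℕ := sInf (lamSet ρ x)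

open scoped Classical in
def IsSlowSurface {Ω : Type*} (b : ℤ × ℕ → Ω → Bool) (η : ℕ → Ω → ℤ → ℕ) : Prop :=
  (∀ ω x, η 0 ω x = 0) ∧
  ∀ ω t x, η (t + 1) ω x =
    if b (x, t) ω = true ∧ ∀ y : ℤ, |y - x| ≤ 1 → η t ω x ≤ η t ω y
    then η t ω x + 1 else η t ω x

open scoped Classical in
def IsFastSurface {Ω : Type*} (b : ℤ × ℕ → Ω → Bool) (η : ℕ → Ω → ℤ → ℕ) : Prop :=
  (∀ ω x, η 0 ω x = 0) ∧
  ∀ ω t x, η (t + 1) ω x =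
    if b (x, t) ω = true ∨ ∃ y : ℤ, |y - x| ≤ 1 ∧ η t ω x < η t ω y
    then η t ω x + 1 else η t ω x

def AdmissibleField {Ω : Type*} [MeasureSpace Ω] (p' : ℝ) (r : ℕ)
    (b : ℤ × ℕ → Ω → Bool) : Prop :=
  (∀ i, Measurable (b i)) ∧
  (∀ i, ℙ {ω | b i ω = true} = ENNReal.ofReal p') ∧
  ∀ I : Finset (ℤ × ℕ),
    (∀ i ∈ I, ∀ j ∈ I, i ≠ j → i.2 ≠ j.2 ∨ (r : ℤ) < |i.1 - j.1|) →
    iIndepFun (fun i : I => b i.1) ℙ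



/-- Telescoping sum over an interval. -/
lemma telescope_aux (f : ℕ → ℤ) (a : ℕ) : ∀ n, a ≤ n →
    ∑ j ∈ Finset.Ico a n, (f (j + 1) - f j) = f n - f a := by
  intro n
  induction n with
  | zero =>
    intro h
    have ha0 : a = 0 := by omega
    subst ha0
    simp
  | succ n ih =>
    intro h
    rcases Nat.lt_or_ge a (n + 1) with h1 | h1
    · have ha : a ≤ n := by omega
      rw [Finset.sum_Ico_succ_top ha, ih ha]; ring
    · have : a = n + 1 := by omega
      subst this; simp

/-- The fast surface is bounded by the max over nearest-neighbour paths of sums of `b`'s. -/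
lemma exists_path {Ω : Type*} (b : ℤ × ℕ → Ω → Bool) (η : ℕ → Ω → ℤ → ℕ)
    (hη : IsFastSurface b η) (ω : Ω) :
    ∀ t x, ∃ f : ℕ → ℤ, f t = x ∧ (∀ s, s < t → |f (s + 1) - f s| ≤ 1) ∧
      η t ω x ≤ ((Finset.range t).filter (fun s => b (f (s + 1), s) ω = true)).card := by
  intro t
  induction t with
  | zero =>
    intro x
    exact ⟨fun _ => x, rfl, by omega, by simp [hη.1 ω x]⟩
  | succ t ih =>
    intro x
    have build : ∀ y : ℤ, |x - y| ≤ 1 →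
        ∀ f : ℕ → ℤ, f t = y → (∀ s, s < t → |f (s + 1) - f s| ≤ 1) →
        ∃ f' : ℕ → ℤ, f' (t + 1) = x ∧ (∀ s, s < t + 1 → |f' (s + 1) - f' s| ≤ 1) ∧
          (∀ s, s ≤ t → f' s = f s) := by
      intro y hy f hft hstep
      refine ⟨fun s => if s ≤ t then f s else x, by simp, ?_, fun s hs => if_pos hs⟩
      intro s hs
      rcases Nat.lt_or_ge s t with h | h
      · have h1 : s + 1 ≤ t := h
        have h2 : s ≤ t := by omega
        simpa [h1, h2] using hstep s h
      · have hst : s = t := by omega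
        rw [hst]
        show |(if t + 1 ≤ t then f (t + 1) else x) - (if t ≤ t then f t else x)| ≤ 1
        rw [if_neg (by omega : ¬ (t + 1 ≤ t)), if_pos (le_refl t), hft]
        exact hy
    have hrec := hη.2 ω t x
    have main : ∀ y : ℤ, |x - y| ≤ 1 → ∀ n : ℕ, n ≤ η t ω y →
        ∀ extra : ℕ, extra ≤ 1 → (extra = 1 → b (x, t) ω = true) →
        η (t + 1) ω x ≤ n + extra →
        ∃ f : ℕ → ℤ, f (t + 1) = x ∧ (∀ s, s < t + 1 → |f (s + 1) - f s| ≤ 1) ∧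
          η (t + 1) ω x ≤
            ((Finset.range (t + 1)).filter (fun s => b (f (s + 1), s) ω = true)).card := by
      intro y hy n hn extra hextra hbe hbound
      obtain ⟨f, hft, hstep, hcard⟩ := ih y
      obtain ⟨f', hf't, hstep', heq⟩ := build y hy f hft hstep
      refine ⟨f', hf't, hstep', ?_⟩
      have hfe : (Finset.range t).filter (fun s => b (f' (s + 1), s) ω = true)
          = (Finset.range t).filter (fun s => b (f (s + 1), s) ω = true) := by
        apply Finset.filter_congr
        intro s hs
        rw [heq (s + 1) (Finset.mem_range.mp hs)]
      rw [Finset.range_add_one, Finset.filter_insert]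
      by_cases hbt : b (f' (t + 1), t) ω = true
      · rw [if_pos hbt, Finset.card_insert_of_notMem (by simp), hfe]
        omega
      · rw [if_neg hbt, hfe]
        have hextra0 : extra = 0 := by
          rcases Nat.lt_or_ge extra 1 with h | h
          · omega
          · exfalso; apply hbt; rw [hf't]; exact hbe (by omega)
        omega
    by_cases hc : b (x, t) ω = true ∨ ∃ y : ℤ, |y - x| ≤ 1 ∧ η t ω x < η t ω y
    · rw [if_pos hc] at hrec
      by_cases hb : b (x, t) ω = true
      · exact main x (by simp) (η t ω x) le_rfl 1 le_rfl (fun _ => hb) (by omega)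
      · obtain ⟨y, hy, hlt⟩ := hc.resolve_left hb
        refine main y (by rw [abs_sub_comm]; exact hy) (η t ω x + 1) hlt 0 (by omega)
          (by omega) (by omega)
    · rw [if_neg hc] at hrec
      exact main x (by simp) (η t ω x) le_rfl 0 (by omega) (by omega) (by omega)

/-- Position along a path reconstructed from its increments. -/
def posPath (x : ℤ) {t : ℕ} (d : Fin t → ℤ) (s : Fin t) : ℤ :=
  x - ∑ j : Fin t, if (s : ℕ) < (j : ℕ) then d j else 0

lemma incl_lemma {Ω : Type*} (b : ℤ × ℕ → Ω → Bool) (η : ℕ → Ω → ℤ → ℕ)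
    (hη : IsFastSurface b η) (x : ℤ) (t k : ℕ) :
    {ω | k ≤ η t ω x} ⊆
      ⋃ d ∈ Fintype.piFinset (fun _ : Fin t => Finset.Icc (-1 : ℤ) 1),
        ⋃ S ∈ Finset.powersetCard k (Finset.univ : Finset (Fin t)),
          ⋂ s ∈ S, {ω | b (posPath x d s, (s : ℕ)) ω = true} := by
  intro ω hω
  obtain ⟨f, hft, hstep, hcard⟩ := exists_path b η hη ω t x
  set d : Fin t → ℤ := fun j => f ((j : ℕ) + 1) - f (j : ℕ) with hd
  have hdmem : d ∈ Fintype.piFinset (fun _ : Fin t => Finset.Icc (-1 : ℤ) 1) := by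
    rw [Fintype.mem_piFinset]
    intro j
    have habs := abs_le.mp (hstep (j : ℕ) j.isLt)
    rw [Finset.mem_Icc, hd]
    exact habs
  have hpos : ∀ s : Fin t, posPath x d s = f ((s : ℕ) + 1) := by
    intro s
    unfold posPath
    have h1 : ∑ j : Fin t, (if (s : ℕ) < (j : ℕ) then d j else 0)
        = ∑ j ∈ Finset.range t, (if (s : ℕ) < j then f (j + 1) - f j else 0) :=
      Fin.sum_univ_eq_sum_range (fun j => if (s : ℕ) < j then f (j + 1) - f j else 0) t
    have hfilt : (Finset.range t).filter (fun j => (s : ℕ) < j)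
        = Finset.Ico ((s : ℕ) + 1) t := by
      ext j
      simp only [Finset.mem_filter, Finset.mem_range, Finset.mem_Ico]
      omega
    have h2 : ∑ j ∈ Finset.range t, (if (s : ℕ) < j then f (j + 1) - f j else 0)
        = f t - f ((s : ℕ) + 1) := by
      rw [← Finset.sum_filter, hfilt, telescope_aux f ((s : ℕ) + 1) t s.isLt]
    rw [h1, h2, hft]
    ring
  have hkc : k ≤ ((Finset.range t).filter (fun s => b (f (s + 1), s) ω = true)).card :=
    le_trans hω hcard
  obtain ⟨S', hS'sub, hS'card⟩ := Finset.exists_subset_card_eq hkc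
  have hlt : ∀ m ∈ S', m < t := fun m hm =>
    Finset.mem_range.mp (Finset.mem_filter.mp (hS'sub hm)).1
  refine Set.mem_iUnion₂.mpr ⟨d, hdmem, Set.mem_iUnion₂.mpr ⟨S'.attachFin hlt, ?_, ?_⟩⟩
  · rw [Finset.mem_powersetCard]
    exact ⟨Finset.subset_univ _, by rw [Finset.card_attachFin]; exact hS'card⟩
  · refine Set.mem_iInter₂.mpr ?_
    intro s hs
    have hsS' : (s : ℕ) ∈ S' := (Finset.mem_attachFin hlt).mp hs
    have hbs := (Finset.mem_filter.mp (hS'sub hsS')).2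
    show b (posPath x d s, (s : ℕ)) ω = true
    rw [hpos s]
    exact hbs

lemma meas_event {Ω : Type} [MeasureSpace Ω] [IsProbabilityMeasure (ℙ : Measure Ω)]
    {p' : ℝ} {r : ℕ} {b : ℤ × ℕ → Ω → Bool} (hb : AdmissibleField p' r b)
    {t : ℕ} (g : Fin t → ℤ) (S : Finset (Fin t)) :
    ℙ (⋂ s ∈ S, {ω | b (g s, (s : ℕ)) ω = true}) = (ENNReal.ofReal p') ^ S.card := by
  classical
  set F : Fin t → ℤ × ℕ := fun s => (g s, (s : ℕ)) with hF
  have hFinj : Function.Injective F := by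
    intro a c hac
    exact Fin.val_injective (congrArg Prod.snd hac)
  set I : Finset (ℤ × ℕ) := S.image F with hI
  have hcond : ∀ i ∈ I, ∀ j ∈ I, i ≠ j → i.2 ≠ j.2 ∨ (r : ℤ) < |i.1 - j.1| := by
    intro i hi j hj hij
    left
    obtain ⟨a, _, rfl⟩ := Finset.mem_image.mp hi
    obtain ⟨c, _, rfl⟩ := Finset.mem_image.mp hj
    intro h2
    exact hij (congrArg F (Fin.val_injective h2))
  have hind := hb.2.2 I hcond
  have hmeas := (iIndepFun_iff_measure_inter_preimage_eq_mul.mp hind) Finset.univ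
      (sets := fun _ => {true}) (fun i _ => MeasurableSpace.measurableSet_top)
  have hset : (⋂ s ∈ S, {ω | b (g s, (s : ℕ)) ω = true})
      = ⋂ i ∈ (Finset.univ : Finset ↥I), (fun i : ↥I => b i.1) i ⁻¹' {true} := by
    ext ω
    simp only [Set.mem_iInter, Set.mem_preimage, Set.mem_singleton_iff, Finset.mem_univ,
      forall_true_left, Set.mem_setOf_eq, Subtype.forall]
    constructor
    · intro h i hi
      obtain ⟨a, ha, rfl⟩ := Finset.mem_image.mp hi
      exact h a ha
    · intro h s hs
      exact h (F s) (Finset.mem_image_of_mem F hs)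
  rw [hset, hmeas]
  have heach : ∀ i : ↥I, ℙ ((fun i : ↥I => b i.1) i ⁻¹' {true}) = ENNReal.ofReal p' := by
    intro i
    have hpre : ((fun i : ↥I => b i.1) i ⁻¹' {true}) = {ω | b i.1 ω = true} := by
      ext ω; simp
    rw [hpre]
    exact hb.2.1 i.1
  rw [Finset.prod_congr rfl (fun i _ => heach i), Finset.prod_const, Finset.card_univ,
    Fintype.card_coe, hI, Finset.card_image_of_injective S hFinj]

theorem stmt15 (r : ℕ) (ε : ℝ) (hε : 0 < ε) :
    ∃ p'₀ : ℝ, 0 < p'₀ ∧ ∃ cc : ℝ, 0 < cc ∧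
      ∀ p' : ℝ, 0 < p' → p' ≤ p'₀ →
      ∀ (Ω : Type) [MeasureSpace Ω] [IsProbabilityMeasure (ℙ : Measure Ω)]
        (b : ℤ × ℕ → Ω → Bool), AdmissibleField p' r b →
        ∀ η : ℕ → Ω → ℤ → ℕ, IsFastSurface b η →
        ∀ x : ℤ, ∀ t : ℕ,
          ℙ {ω | ε * t ≤ (η t ω x : ℝ)} ≤ ENNReal.ofReal (Real.exp (-cc * t)) := by
  set ε' : ℝ := min ε 1 with hε'def
  have hε' : 0 < ε' := lt_min hε one_pos
  have hε'1 : ε' ≤ 1 := min_le_right _ _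
  have hε'ε : ε' ≤ ε := min_le_left _ _
  set m : ℕ := ⌈1 / ε'⌉₊ with hmdef
  refine ⟨(1 / 12 : ℝ) ^ m, by positivity, Real.log 2, Real.log_pos one_lt_two, ?_⟩
  intro p' hp'0 hp' Ω _ _ b hb η hη x t
  set k : ℕ := ⌈ε' * t⌉₊ with hkdef
  have hkt : k ≤ t := Nat.ceil_le.mpr (by nlinarith [Nat.cast_nonneg (α := ℝ) t])
  -- the natural-number threshold event
  have hsub : {ω | ε * t ≤ (η t ω x : ℝ)} ⊆ {ω | k ≤ η t ω x} := by
    intro ω hω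
    have h1 : ε' * t ≤ (η t ω x : ℝ) :=
      le_trans (mul_le_mul_of_nonneg_right hε'ε (Nat.cast_nonneg t)) hω
    exact Nat.ceil_le.mpr h1
  have htmk : t ≤ m * k := by
    have hm : 1 / ε' ≤ (m : ℝ) := Nat.le_ceil _
    have hk : ε' * t ≤ (k : ℝ) := Nat.le_ceil _
    have h1 : (1 / ε') * (ε' * t) ≤ (m : ℝ) * (k : ℝ) :=
      mul_le_mul hm hk (mul_nonneg hε'.le (Nat.cast_nonneg t)) (le_trans (by positivity) hm)
    have h2 : (t : ℝ) ≤ (m : ℝ) * (k : ℝ) := by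
      calc (t : ℝ) = (1 / ε') * (ε' * t) := by field_simp
        _ ≤ _ := h1
    exact_mod_cast h2
  set D := Fintype.piFinset (fun _ : Fin t => Finset.Icc (-1 : ℤ) 1) with hDdef
  set P := Finset.powersetCard k (Finset.univ : Finset (Fin t)) with hPdef
  have hDcard : D.card = 3 ^ t := by
    rw [hDdef, Fintype.card_piFinset]
    simp [Int.card_Icc]
  have hPcard : P.card = t.choose k := by
    rw [hPdef, Finset.card_powersetCard, Finset.card_univ, Fintype.card_fin]
  have step1 : ℙ {ω | k ≤ η t ω x} ≤ ((D.card * P.card : ℕ) : ℝ≥0∞) * ENNReal.ofReal p' ^ k := by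
    calc ℙ {ω | k ≤ η t ω x}
        ≤ ℙ (⋃ d ∈ D, ⋃ S ∈ P, ⋂ s ∈ S, {ω | b (posPath x d s, (s : ℕ)) ω = true}) :=
          measure_mono (incl_lemma b η hη x t k)
      _ ≤ ∑ d ∈ D, ℙ (⋃ S ∈ P, ⋂ s ∈ S, {ω | b (posPath x d s, (s : ℕ)) ω = true}) :=
          measure_biUnion_finset_le D _
      _ ≤ ∑ d ∈ D, ∑ S ∈ P, ℙ (⋂ s ∈ S, {ω | b (posPath x d s, (s : ℕ)) ω = true}) :=
          Finset.sum_le_sum (fun d _ => measure_biUnion_finset_le P _)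
      _ = ∑ d ∈ D, ∑ S ∈ P, ENNReal.ofReal p' ^ k := by
          refine Finset.sum_congr rfl (fun d _ => Finset.sum_congr rfl (fun S hS => ?_))
          rw [meas_event hb (posPath x d) S,
            (Finset.mem_powersetCard.mp hS).2]
      _ = ((D.card * P.card : ℕ) : ℝ≥0∞) * ENNReal.ofReal p' ^ k := by
          simp [Finset.sum_const, mul_assoc]
  have hreal : ((D.card * P.card : ℕ) : ℝ) * p' ^ k ≤ Real.exp (-Real.log 2 * t) := by
    have hchoose : (t.choose k : ℝ) ≤ 2 ^ t := by
      have h1 : t.choose k ≤ 2 ^ t := by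
        calc t.choose k ≤ ∑ i ∈ Finset.range (t + 1), t.choose i :=
            Finset.single_le_sum (fun i _ => Nat.zero_le _) (Finset.mem_range.mpr (by omega))
          _ = 2 ^ t := Nat.sum_range_choose t
      exact_mod_cast h1
    have hpk : p' ^ k ≤ (1 / 12 : ℝ) ^ t := by
      calc p' ^ k ≤ ((1 / 12 : ℝ) ^ m) ^ k := pow_le_pow_left₀ hp'0.le hp' k
        _ = (1 / 12 : ℝ) ^ (m * k) := by rw [← pow_mul]
        _ ≤ (1 / 12 : ℝ) ^ t := pow_le_pow_of_le_one (by norm_num) (by norm_num) htmk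
    have hexp : Real.exp (-Real.log 2 * t) = ((2 : ℝ)⁻¹) ^ t := by
      rw [mul_comm, Real.exp_nat_mul, Real.exp_neg, Real.exp_log two_pos]
    rw [hexp]
    calc ((D.card * P.card : ℕ) : ℝ) * p' ^ k
        = (3 : ℝ) ^ t * (t.choose k : ℝ) * p' ^ k := by
          rw [hDcard, hPcard]; push_cast; ring
      _ ≤ (3 : ℝ) ^ t * 2 ^ t * (1 / 12 : ℝ) ^ t := by
          apply mul_le_mul
          · exact mul_le_mul_of_nonneg_left hchoose (by positivity)
          · exact hpk
          · positivity
          · positivity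
      _ = ((2 : ℝ)⁻¹) ^ t := by
          rw [← mul_pow, ← mul_pow]
          norm_num
  calc ℙ {ω | ε * t ≤ (η t ω x : ℝ)} ≤ ℙ {ω | k ≤ η t ω x} := measure_mono hsub
    _ ≤ ((D.card * P.card : ℕ) : ℝ≥0∞) * ENNReal.ofReal p' ^ k := step1
    _ = ENNReal.ofReal (((D.card * P.card : ℕ) : ℝ) * p' ^ k) := by
        rw [ENNReal.ofReal_mul (by positivity), ENNReal.ofReal_natCast,
          ENNReal.ofReal_pow hp'0.le]
    _ ≤ ENNReal.ofReal (Real.exp (-Real.log 2 * t)) := ENNReal.ofReal_le_ofReal hreal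

end
end

section
/- Let 𝒯 be a supercritical CA and u a unit vector. Suppose x_u^r ∈ ℓ_u ∩ 𝒩 is such that, for some α > 0, every line ℓ obtained from ℓ_u by a rotation about x_u^r through an angle in (0, α) satisfies π_d(ℒ⁻(ℓ)) = 1 and π_d(ℒ°(ℓ)) = 0. Then there exists β > 0 such that whenever v₁ is the rotation of u by an angle in (0, β), the convex wedge W⁺ = H_u⁻ ∩ H_{v₁}⁻ is invariant: 𝒯̄(W⁺) = −x_u^r + W⁺. Symmetrically, if x_u^ℓ ∈ ℓ_u ∩ 𝒩 has the analogous property for rotations through angles in (−α, 0), then for v₂ a rotation of u by a sufficiently small negative angle, the convex wedge W⁻ = H_u⁻ ∩ H_{v₂}⁻ satisfies 𝒯̄(W⁻) = −x_u^ℓ + W⁻. -/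
open MeasureTheory ProbabilityTheory Filter Topology Set
open scoped Pointwise ENNReal

noncomputable section

lemma rot_eq' (b : ℝ) (v : Pt) :
    rot b v = Real.cos b • v + Real.sin b • mkPt (-(v 1)) (v 0) := by
  unfold rot mkPt
  ext i
  fin_cases i <;>
    simp [PiLp.add_apply, PiLp.smul_apply, smul_eq_mul] <;> ring

lemma inner_n (y u p : Pt) (b : ℝ) :
    (inner ℝ y (Real.cos b • u + Real.sin b • p) : ℝ)
      = Real.cos b * inner ℝ y u + Real.sin b * inner ℝ y p := by
  rw [inner_add_right, real_inner_smul_right, real_inner_smul_right]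

lemma key_lemma (c : CA) (u p : Pt) (xr : Pt) (hxrN : xr ∈ c.N)
    (hxru : (inner ℝ xr u : ℝ) < 0) (α : ℝ) (hα : 0 < α)
    (hrule : ∀ β : ℝ, 0 < β → β < α →
      c.rule (farClosed c.N xr (Real.cos β • u + Real.sin β • p)) ∧
      ¬ c.rule (farOpen c.N xr (Real.cos β • u + Real.sin β • p))) :
    ∃ βb : ℝ, 0 < βb ∧ ∀ γ : ℝ, 0 < γ → γ < βb →
      c.Tbar (Hminus u ∩ Hminus (Real.cos γ • u + Real.sin γ • p)) =
        (fun x => x - xr) '' (Hminus u ∩ Hminus (Real.cos γ • u + Real.sin γ • p)) := by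
  classical
  -- g y β = ⟪y, cos β • u + sin β • p⟫
  set g : Pt → ℝ → ℝ := fun y β => Real.cos β * inner ℝ y u + Real.sin β * inner ℝ y p with hg
  have htend : ∀ y : Pt, Filter.Tendsto (g y) (nhds 0) (nhds (inner ℝ y u : ℝ)) := by
    intro y
    have hc : Continuous (g y) :=
      (Real.continuous_cos.mul continuous_const).add (Real.continuous_sin.mul continuous_const)
    have := hc.tendsto 0
    simpa [hg] using this
  set L : Filter ℝ := nhdsWithin 0 (Set.Ioi 0) with hL
  have hE1 : ∀ᶠ β in L, 0 < β ∧ β < α := by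
    have h1 : Set.Ioo (0:ℝ) α ∈ L := Ioo_mem_nhdsGT_of_mem ⟨le_refl 0, hα⟩
    filter_upwards [h1] with β hβ
    exact ⟨hβ.1, hβ.2⟩
  have hE2 : ∀ᶠ β in L, g xr β < 0 :=
    ((htend xr).eventually (Iio_mem_nhds hxru)).filter_mono nhdsWithin_le_nhds
  have hEz : ∀ z : Pt, ∀ᶠ β in L,
      (((inner ℝ (z - xr) u : ℝ) < 0) → g (z - xr) β < 0) ∧
      ((0 < (inner ℝ (z - xr) u : ℝ)) → 0 < g (z - xr) β) := by
    intro z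
    rcases lt_trichotomy ((inner ℝ (z - xr) u : ℝ)) 0 with h | h | h
    · have h1 : ∀ᶠ β in L, g (z - xr) β < 0 :=
        ((htend _).eventually (Iio_mem_nhds h)).filter_mono nhdsWithin_le_nhds
      filter_upwards [h1] with β hβ
      exact ⟨fun _ => hβ, fun h' => absurd h' (by linarith)⟩
    · filter_upwards with β
      exact ⟨fun h' => absurd h' (by simp [h]), fun h' => absurd h' (by simp [h])⟩
    · have h1 : ∀ᶠ β in L, 0 < g (z - xr) β :=
        ((htend _).eventually (Ioi_mem_nhds h)).filter_mono nhdsWithin_le_nhds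
      filter_upwards [h1] with β hβ
      exact ⟨fun h' => absurd h' (by linarith), fun _ => hβ⟩
  have hEN : ∀ᶠ β in L, ∀ z ∈ c.N,
      (((inner ℝ (z - xr) u : ℝ) < 0) → g (z - xr) β < 0) ∧
      ((0 < (inner ℝ (z - xr) u : ℝ)) → 0 < g (z - xr) β) :=
    (eventually_all_finite c.finite).2 (fun z _ => hEz z)
  have hAll := (hE1.and (hE2.and hEN))
  rw [Filter.eventually_iff, hL, mem_nhdsGT_iff_exists_Ioo_subset] at hAll
  obtain ⟨δ, hδ, hsub⟩ := hAll
  refine ⟨δ, hδ, ?_⟩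
  intro γ hγ0 hγδ
  obtain ⟨⟨_, hγα⟩, hxrv, hP⟩ := hsub ⟨hγ0, hγδ⟩
  set v : Pt := Real.cos γ • u + Real.sin γ • p with hv
  have hinnv : ∀ y : Pt, (inner ℝ y v : ℝ) = g y γ := fun y => inner_n y u p γ
  have hxrv' : (inner ℝ xr v : ℝ) < 0 := by rw [hinnv]; exact hxrv
  obtain ⟨hcl, hop⟩ := hrule γ hγ0 hγα
  -- a z ≤ 0 for z in farClosed, etc.
  ext x
  simp only [CA.Tbar, Set.mem_setOf_eq]
  constructor
  · intro hx
    -- show x + xr ∈ W, then x ∈ image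
    by_contra hnot
    have hxw : ¬ ((inner ℝ (x + xr) u : ℝ) ≤ 0 ∧ (inner ℝ (x + xr) v : ℝ) ≤ 0) := by
      intro ⟨h1, h2⟩
      exact hnot ⟨x + xr, ⟨h1, h2⟩, add_sub_cancel_right (x) xr⟩
    push_neg at hxw
    -- S ⊆ farOpen
    have hsubS : ((fun a => a - x) '' (Hminus u ∩ Hminus v) ∩ lattice) ∩ c.N
        ⊆ farOpen c.N xr v := by
      rintro z ⟨⟨⟨y, ⟨hyu, hyv⟩, rfl⟩, -⟩, hzN⟩
      refine ⟨hzN, ?_⟩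
      have hyu' : (inner ℝ y u : ℝ) ≤ 0 := hyu
      have hyv' : (inner ℝ y v : ℝ) ≤ 0 := hyv
      have hzv : (inner ℝ (y - x - xr) v : ℝ) < 0 := by
        rcases le_or_gt ((inner ℝ (x + xr) u : ℝ)) 0 with hA | hA
        · -- then 0 < ⟪x+xr, v⟫
          have hB := hxw hA
          have : (inner ℝ (y - x - xr) v : ℝ) = inner ℝ y v - inner ℝ (x + xr) v := by
            rw [show y - x - xr = y - (x + xr) by abel, inner_sub_left]
          linarith [this]
        · -- ⟪z - xr, u⟫ < 0, use hP
          have hau : (inner ℝ (y - x - xr) u : ℝ) < 0 := by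
            have : (inner ℝ (y - x - xr) u : ℝ) = inner ℝ y u - inner ℝ (x + xr) u := by
              rw [show y - x - xr = y - (x + xr) by abel, inner_sub_left]
            linarith [this]
          have := (hP (y - x) hzN).1 (by rwa [show y - x - xr = y - x - xr by rfl] at hau)
          rw [show (y - x - xr : Pt) = y - x - xr by rfl] at this ⊢
          rw [hinnv]
          exact this
      exact mul_pos_of_neg_of_neg hzv hxrv'
    exact hop (c.mono hsubS hx)
  · rintro ⟨y, ⟨hyu, hyv⟩, rfl⟩
    -- x = y - xr, so x + xr = y ∈ W; show farClosed ⊆ S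
    have hyu' : (inner ℝ y u : ℝ) ≤ 0 := hyu
    have hyv' : (inner ℝ y v : ℝ) ≤ 0 := hyv
    have hsubS : farClosed c.N xr v ⊆
        ((fun a => a - (y - xr)) '' (Hminus u ∩ Hminus v) ∩ lattice) ∩ c.N := by
      rintro z ⟨hzN, hzfar⟩
      have hzv : (inner ℝ (z - xr) v : ℝ) ≤ 0 := by
        by_contra h
        push_neg at h
        nlinarith [hzfar]
      have hzu : (inner ℝ (z - xr) u : ℝ) ≤ 0 := by
        by_contra h
        push_neg at h
        have := (hP z hzN).2 h
        rw [← hinnv] at this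
        linarith
      refine ⟨⟨⟨z + (y - xr), ⟨?_, ?_⟩, add_sub_cancel_right z (y - xr)⟩, c.subLat hzN⟩, hzN⟩
      · show (inner ℝ (z + (y - xr)) u : ℝ) ≤ 0
        have : (inner ℝ (z + (y - xr)) u : ℝ) = inner ℝ (z - xr) u + inner ℝ y u := by
          rw [show z + (y - xr) = (z - xr) + y by abel, inner_add_left]
        linarith [this]
      · show (inner ℝ (z + (y - xr)) v : ℝ) ≤ 0
        have : (inner ℝ (z + (y - xr)) v : ℝ) = inner ℝ (z - xr) v + inner ℝ y v := by
          rw [show z + (y - xr) = (z - xr) + y by abel, inner_add_left]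
        linarith [this]
    exact c.mono hsubS hcl


theorem stmt17 (c : CA) (w : Pt → ℝ) (hw : IsSpeed c w) (hsc : Supercritical w)
    (u : Pt) (hu : ‖u‖ = 1) :
    (∀ xr ∈ lineu w u ∩ c.N, ∀ α : ℝ, 0 < α →
      (∀ β : ℝ, 0 < β → β < α →
        c.rule (farClosed c.N xr (rot β u)) ∧ ¬ c.rule (farOpen c.N xr (rot β u))) →
      ∃ βb : ℝ, 0 < βb ∧ ∀ γ : ℝ, 0 < γ → γ < βb →
        c.Tbar (Hminus u ∩ Hminus (rot γ u)) =
          (fun x => x - xr) '' (Hminus u ∩ Hminus (rot γ u))) ∧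
    (∀ xl ∈ lineu w u ∩ c.N, ∀ α : ℝ, 0 < α →
      (∀ β : ℝ, -α < β → β < 0 →
        c.rule (farClosed c.N xl (rot β u)) ∧ ¬ c.rule (farOpen c.N xl (rot β u))) →
      ∃ βb : ℝ, 0 < βb ∧ ∀ γ : ℝ, -βb < γ → γ < 0 →
        c.Tbar (Hminus u ∩ Hminus (rot γ u)) =
          (fun x => x - xl) '' (Hminus u ∩ Hminus (rot γ u))) := by
  constructor
  · rintro xr ⟨hxl, hxN⟩ α hα hrules
    have hwu : 0 < w u := hsc u hu
    have hxru : (inner ℝ xr u : ℝ) < 0 := by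
      have : (inner ℝ xr u : ℝ) = -(w u) := hxl
      linarith [this]
    have hrules' : ∀ β : ℝ, 0 < β → β < α →
        c.rule (farClosed c.N xr (Real.cos β • u + Real.sin β • mkPt (-(u 1)) (u 0))) ∧
        ¬ c.rule (farOpen c.N xr (Real.cos β • u + Real.sin β • mkPt (-(u 1)) (u 0))) := by
      intro β hβ0 hβα
      have := hrules β hβ0 hβα
      rwa [rot_eq'] at this
    obtain ⟨βb, hβb, hmain⟩ := key_lemma c u (mkPt (-(u 1)) (u 0)) xr hxN hxru α hα hrules'
    refine ⟨βb, hβb, ?_⟩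
    intro γ hγ0 hγβ
    rw [rot_eq']
    exact hmain γ hγ0 hγβ
  · rintro xl ⟨hxll, hxN⟩ α hα hrules
    have hwu : 0 < w u := hsc u hu
    have hxru : (inner ℝ xl u : ℝ) < 0 := by
      have : (inner ℝ xl u : ℝ) = -(w u) := hxll
      linarith [this]
    have hrotneg : ∀ b : ℝ, rot (-b) u =
        Real.cos b • u + Real.sin b • (-(mkPt (-(u 1)) (u 0))) := by
      intro b
      rw [rot_eq', Real.cos_neg, Real.sin_neg, smul_neg, neg_smul]
    have hrules' : ∀ β : ℝ, 0 < β → β < α →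
        c.rule (farClosed c.N xl (Real.cos β • u + Real.sin β • (-(mkPt (-(u 1)) (u 0))))) ∧
        ¬ c.rule (farOpen c.N xl (Real.cos β • u + Real.sin β • (-(mkPt (-(u 1)) (u 0))))) := by
      intro β hβ0 hβα
      have := hrules (-β) (by linarith) (by linarith)
      rwa [hrotneg β] at this
    obtain ⟨βb, hβb, hmain⟩ := key_lemma c u (-(mkPt (-(u 1)) (u 0))) xl hxN hxru α hα hrules'
    refine ⟨βb, hβb, ?_⟩
    intro γ hγβ hγ0
    have := hmain (-γ) (by linarith) (by linarith)
    rwa [← hrotneg (-γ), neg_neg] at this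

end
end

section
/- Let ρ ≥ 1 be an integer. (i) For every integer θ with 2ρ² + 1 ≤ θ, there is no x ∈ 𝒩_ρ ∖ {0} with Λ*(x) = θ (hence all supercritical range-ρ box threshold growth CA with threshold θ ≥ 2ρ² + 1 are exactly stable). (ii) For every integer θ with 1 ≤ θ ≤ ρ, and for every θ of the form θ = ρ + 1 + i(2ρ + 1) with 0 ≤ i ≤ ρ − 1, there exists x ∈ 𝒩_ρ ∖ {0} with Λ*(x) = θ (hence these thresholds are not exactly stable). -/
open MeasureTheory ProbabilityTheory Filter Topology Set
open scoped Pointwise ENNReal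

noncomputable section

/-! ### Auxiliary lemmas for stmt19 -/

lemma mem_boxN' {ρ : ℕ} {y : ℤ × ℤ} :
    y ∈ boxN ρ ↔ -(ρ:ℤ) ≤ y.1 ∧ y.1 ≤ ρ ∧ -(ρ:ℤ) ≤ y.2 ∧ y.2 ≤ ρ := by
  simp only [boxN, Finset.mem_Icc, Prod.le_def]
  tauto

lemma lamSet_lb (ρ : ℕ) (x : ℤ × ℤ) (T : Finset (ℤ × ℤ))
    (hT : ∀ y ∈ T, y ∈ boxN ρ)
    (hr : ∀ y ∈ T, (2*x.1 - y.1, 2*x.2 - y.2) ∈ boxN ρ)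
    (hcap : ∀ y ∈ T, ∀ z ∈ T, y.1 + z.1 = 2*x.1 → y.2 + z.2 = 2*x.2 → z = x) :
    ∀ n ∈ lamSet ρ x, T.card ≤ n := by
  rintro n ⟨a, b, cc, hab, hcc, hline, rfl⟩
  classical
  unfold cutCard
  set f : ℤ × ℤ → ℤ × ℤ := fun y =>
    if cc ≤ a * y.1 + b * y.2 then y else (2*x.1 - y.1, 2*x.2 - y.2) with hf
  apply Finset.card_le_card_of_injOn f
  · intro y hy
    rw [Finset.mem_coe, Finset.mem_filter]
    by_cases h : cc ≤ a * y.1 + b * y.2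
    · rw [hf]; simp only [if_pos h]; exact ⟨hT y hy, h⟩
    · rw [hf]; simp only [if_neg h]
      refine ⟨hr y hy, ?_⟩
      push_neg at h
      push_cast
      linarith
  · intro y hy z hz hfyz
    rw [Finset.mem_coe] at hy hz
    simp only [hf] at hfyz
    by_cases h1 : cc ≤ a * y.1 + b * y.2 <;> by_cases h2 : cc ≤ a * z.1 + b * z.2
    · rw [if_pos h1, if_pos h2] at hfyz; exact hfyz
    · rw [if_pos h1, if_neg h2] at hfyz
      have e1 : y.1 = 2*x.1 - z.1 := by rw [hfyz]
      have e2 : y.2 = 2*x.2 - z.2 := by rw [hfyz]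
      have hzx : z = x := hcap y hy z hz (by omega) (by omega)
      exfalso; apply h2; rw [hzx]; exact hline.ge
    · rw [if_neg h1, if_pos h2] at hfyz
      have e1 : z.1 = 2*x.1 - y.1 := by rw [← hfyz]
      have e2 : z.2 = 2*x.2 - y.2 := by rw [← hfyz]
      have hyx : y = x := hcap z hz y hy (by omega) (by omega)
      exfalso; apply h1; rw [hyx]; exact hline.ge
    · rw [if_neg h1, if_neg h2] at hfyz
      injection hfyz with e1 e2
      exact Prod.ext (by omega) (by omega)

lemma lamStar_eq_of (ρ : ℕ) (x : ℤ × ℤ) (θ : ℕ)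
    (hub : ∃ n ∈ lamSet ρ x, n ≤ θ) (hlb : ∀ n ∈ lamSet ρ x, θ ≤ n) :
    lamStar ρ x = θ := by
  obtain ⟨n, hn, hnθ⟩ := hub
  have h1 : lamStar ρ x ≤ θ := le_trans (Nat.sInf_le hn) hnθ
  have h2 : θ ≤ lamStar ρ x := hlb _ (Nat.sInf_mem ⟨n, hn⟩)
  omega

lemma lamStar_le_of (ρ : ℕ) (x : ℤ × ℤ) (K : ℕ)
    (hub : ∃ n ∈ lamSet ρ x, n ≤ K) : lamStar ρ x ≤ K := by
  obtain ⟨n, hn, hnK⟩ := hub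
  exact le_trans (Nat.sInf_le hn) hnK

lemma cutCard_neg (ρ : ℕ) (a b cc : ℝ) : cutCard ρ (-a) (-b) cc = cutCard ρ a b cc := by
  classical
  unfold cutCard
  apply Finset.card_nbij' (fun y => (-y.1, -y.2)) (fun y => (-y.1, -y.2))
  · intro y hy
    rw [Finset.mem_coe, Finset.mem_filter, mem_boxN'] at hy ⊢
    refine ⟨by simp only; omega, ?_⟩
    push_cast
    linarith [hy.2]
  · intro y hy
    rw [Finset.mem_coe, Finset.mem_filter, mem_boxN'] at hy ⊢
    refine ⟨by simp only; omega, ?_⟩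
    push_cast
    linarith [hy.2]
  · intro y _; simp
  · intro y _; simp

lemma cutCard_swap (ρ : ℕ) (a b cc : ℝ) : cutCard ρ b a cc = cutCard ρ a b cc := by
  classical
  unfold cutCard
  apply Finset.card_nbij' (fun y => (y.2, y.1)) (fun y => (y.2, y.1))
  · intro y hy
    rw [Finset.mem_coe, Finset.mem_filter, mem_boxN'] at hy ⊢
    refine ⟨by simp only; omega, ?_⟩
    push_cast
    linarith [hy.2]
  · intro y hy
    rw [Finset.mem_coe, Finset.mem_filter, mem_boxN'] at hy ⊢
    refine ⟨by simp only; omega, ?_⟩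
    push_cast
    linarith [hy.2]
  · intro y _; simp
  · intro y _; simp

lemma cutCard_flip (ρ : ℕ) (a b cc : ℝ) : cutCard ρ a (-b) cc = cutCard ρ a b cc := by
  classical
  unfold cutCard
  apply Finset.card_nbij' (fun y => (y.1, -y.2)) (fun y => (y.1, -y.2))
  · intro y hy
    rw [Finset.mem_coe, Finset.mem_filter, mem_boxN'] at hy ⊢
    refine ⟨by simp only; omega, ?_⟩
    push_cast
    linarith [hy.2]
  · intro y hy
    rw [Finset.mem_coe, Finset.mem_filter, mem_boxN'] at hy ⊢
    refine ⟨by simp only; omega, ?_⟩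
    push_cast
    linarith [hy.2]
  · intro y _; simp
  · intro y _; simp

lemma lamSet_neg_sub (ρ : ℕ) (x1 x2 : ℤ) : lamSet ρ (x1, x2) ⊆ lamSet ρ (-x1, -x2) := by
  rintro n ⟨a, b, cc, hab, hcc, hline, rfl⟩
  refine ⟨-a, -b, cc, ?_, hcc, ?_, (cutCard_neg ρ a b cc).symm⟩
  · simp only [neg_eq_zero]; exact hab
  · push_cast at hline ⊢; linarith

lemma lamSet_neg (ρ : ℕ) (x1 x2 : ℤ) : lamSet ρ (-x1, -x2) = lamSet ρ (x1, x2) := by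
  apply le_antisymm
  · have := lamSet_neg_sub ρ (-x1) (-x2)
    simpa using this
  · exact lamSet_neg_sub ρ x1 x2

lemma lamSet_swap_sub (ρ : ℕ) (x1 x2 : ℤ) : lamSet ρ (x1, x2) ⊆ lamSet ρ (x2, x1) := by
  rintro n ⟨a, b, cc, hab, hcc, hline, rfl⟩
  refine ⟨b, a, cc, by tauto, hcc, ?_, (cutCard_swap ρ a b cc).symm⟩
  push_cast at hline ⊢; linarith

lemma lamSet_swap (ρ : ℕ) (x1 x2 : ℤ) : lamSet ρ (x2, x1) = lamSet ρ (x1, x2) := by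
  exact le_antisymm (lamSet_swap_sub ρ x2 x1) (lamSet_swap_sub ρ x1 x2)

lemma lamSet_flip_sub (ρ : ℕ) (x1 x2 : ℤ) : lamSet ρ (x1, x2) ⊆ lamSet ρ (x1, -x2) := by
  rintro n ⟨a, b, cc, hab, hcc, hline, rfl⟩
  refine ⟨a, -b, cc, ?_, hcc, ?_, (cutCard_flip ρ a b cc).symm⟩
  · simp only [neg_eq_zero]; exact hab
  · push_cast at hline ⊢; linarith

lemma lamSet_flip (ρ : ℕ) (x1 x2 : ℤ) : lamSet ρ (x1, -x2) = lamSet ρ (x1, x2) := by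
  apply le_antisymm
  · have := lamSet_flip_sub ρ x1 (-x2)
    simpa using this
  · exact lamSet_flip_sub ρ x1 x2

/-- Core upper bound for part (i): x in the first "octant-ish" region. -/
lemma core_ub (ρ : ℕ) (hρ : 1 ≤ ρ) (x1 x2 : ℤ)
    (h1 : 1 ≤ x1) (h2 : x1 ≤ ρ) (h3 : 0 ≤ x2) (h4 : x2 ≤ ρ) :
    ∃ n ∈ lamSet ρ (x1, x2), n ≤ 2 * ρ ^ 2 := by
  classical
  have hρz : (1:ℤ) ≤ (ρ:ℤ) := by exact_mod_cast hρ
  set aZ : ℤ := 2*(ρ:ℤ) + 1 with haZ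
  set ccZ : ℤ := aZ * x1 + x2 with hccZ
  refine ⟨cutCard ρ (aZ:ℝ) 1 (ccZ:ℝ), ⟨(aZ:ℝ), 1, (ccZ:ℝ), ?_, ?_, ?_, rfl⟩, ?_⟩
  · intro h; exact one_ne_zero h.2
  · have : 0 < ccZ := by nlinarith
    exact_mod_cast this
  · rw [hccZ, haZ]; push_cast; ring
  · -- bound the cut cardinality
    set T : Finset (ℤ × ℤ) :=
      (Finset.Icc (x1+1) (ρ:ℤ) ×ˢ Finset.Icc (-(ρ:ℤ)) (ρ:ℤ)) ∪
        ({x1} ×ˢ Finset.Icc x2 (ρ:ℤ)) with hTdef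
    have hsub : cutCard ρ (aZ:ℝ) 1 (ccZ:ℝ) ≤ T.card := by
      unfold cutCard
      apply Finset.card_le_card
      intro y hy
      rw [Finset.mem_filter, mem_boxN'] at hy
      obtain ⟨⟨hb1, hb2, hb3, hb4⟩, hi⟩ := hy
      have hiZ : (ccZ:ℤ) ≤ aZ * y.1 + 1 * y.2 := by exact_mod_cast hi
      have hy1 : x1 ≤ y.1 := by nlinarith
      rw [hTdef, Finset.mem_union, Finset.mem_product, Finset.mem_product,
        Finset.mem_singleton, Finset.mem_Icc, Finset.mem_Icc, Finset.mem_Icc]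
      by_cases hc : y.1 = x1
      · right
        refine ⟨hc, ?_, hb4⟩
        rw [hccZ] at hiZ
        rw [hc] at hiZ
        omega
      · left; omega
    have hcard : T.card ≤ 2 * ρ ^ 2 := by
      have hdisj : Disjoint (Finset.Icc (x1+1) (ρ:ℤ) ×ˢ Finset.Icc (-(ρ:ℤ)) (ρ:ℤ))
          ({x1} ×ˢ Finset.Icc x2 (ρ:ℤ)) := by
        rw [Finset.disjoint_left]
        intro y hy hy'
        rw [Finset.mem_product, Finset.mem_Icc] at hy
        rw [Finset.mem_product, Finset.mem_singleton] at hy'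
        omega
      rw [hTdef, Finset.card_union_of_disjoint hdisj, Finset.card_product,
        Finset.card_product, Finset.card_singleton, Int.card_Icc, Int.card_Icc,
        Int.card_Icc]
      obtain ⟨m, rfl⟩ : ∃ m, ρ = m + 1 := ⟨ρ - 1, by omega⟩
      have e1 : (((m:ℤ)+1) + 1 - (x1+1)).toNat ≤ m := by push_cast; omega
      have e2 : (((m:ℤ)+1) + 1 - (-((m:ℤ)+1))).toNat = 2*m+3 := by push_cast; omega
      have e3 : (((m:ℤ)+1) + 1 - x2).toNat ≤ m + 2 := by push_cast; omega
      calc (((m:ℤ)+1) + 1 - (x1+1)).toNat * (((m:ℤ)+1) + 1 - (-((m:ℤ)+1))).toNat +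
            1 * (((m:ℤ)+1) + 1 - x2).toNat
          ≤ m * (2*m+3) + 1 * (m+2) := by
            rw [e2]
            exact Nat.add_le_add (Nat.mul_le_mul_right _ e1) (Nat.mul_le_mul_left _ e3)
        _ ≤ 2 * (m+1) ^ 2 := by nlinarith
    omega

lemma lamStar_le_main (ρ : ℕ) (hρ : 1 ≤ ρ) (x : ℤ × ℤ) (hx : x ∈ boxN ρ)
    (hne : x ≠ (0, 0)) : lamStar ρ x ≤ 2 * ρ ^ 2 := by
  obtain ⟨x1, x2⟩ := x
  rw [mem_boxN'] at hx
  obtain ⟨hb1, hb2, hb3, hb4⟩ := hx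
  simp only at hb1 hb2 hb3 hb4
  apply lamStar_le_of
  -- reduce to core_ub via symmetries
  have key : ∀ y1 y2 : ℤ, 1 ≤ y1 → y1 ≤ ρ → -(ρ:ℤ) ≤ y2 → y2 ≤ ρ →
      ∃ n ∈ lamSet ρ (y1, y2), n ≤ 2 * ρ ^ 2 := by
    intro y1 y2 k1 k2 k3 k4
    rcases le_or_gt 0 y2 with hy2 | hy2
    · exact core_ub ρ hρ y1 y2 k1 k2 hy2 k4
    · have h := core_ub ρ hρ y1 (-y2) k1 k2 (by omega) (by omega)
      rwa [lamSet_flip] at h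
  have key2 : ∀ y1 y2 : ℤ, y1 ≠ 0 → -(ρ:ℤ) ≤ y1 → y1 ≤ ρ → -(ρ:ℤ) ≤ y2 → y2 ≤ ρ →
      ∃ n ∈ lamSet ρ (y1, y2), n ≤ 2 * ρ ^ 2 := by
    intro y1 y2 hne k1 k2 k3 k4
    rcases lt_or_lt_iff_ne.mpr hne with hy1 | hy1
    · have h := key (-y1) (-y2) (by omega) (by omega) (by omega) (by omega)
      rwa [lamSet_neg] at h
    · exact key y1 y2 (by omega) k2 k3 k4
  rcases eq_or_ne x1 0 with rfl | hx1
  · have hx2 : x2 ≠ 0 := by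
      intro h; exact hne (by rw [h])
    have h := key2 x2 0 hx2 hb3 hb4 (by omega) (by omega)
    rwa [lamSet_swap] at h
  · exact key2 x1 x2 hx1 hb1 hb2 hb3 hb4

/-- Part (ii) witness. -/
lemma part2_lemma (ρ θ : ℕ) (hρ : 1 ≤ ρ) (h1 : 1 ≤ θ) (h2 : θ ≤ ρ) :
    lamStar ρ ((ρ:ℤ), (ρ:ℤ) + 1 - θ) = θ := by
  classical
  have hρz : (1:ℤ) ≤ (ρ:ℤ) := by exact_mod_cast hρ
  set s : ℤ := (ρ:ℤ) + 1 - θ with hs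
  have hs1 : 1 ≤ s := by omega
  have hs2 : s ≤ ρ := by omega
  set T : Finset (ℤ × ℤ) := {(ρ:ℤ)} ×ˢ Finset.Icc s (ρ:ℤ) with hTdef
  have hTcard : T.card = θ := by
    rw [hTdef, Finset.card_product, Finset.card_singleton, Int.card_Icc]
    omega
  have hlb : ∀ n ∈ lamSet ρ ((ρ:ℤ), s), θ ≤ n := by
    intro n hn
    rw [← hTcard]
    apply lamSet_lb ρ ((ρ:ℤ), s) T _ _ _ n hn
    · intro y hy
      rw [hTdef, Finset.mem_product, Finset.mem_singleton, Finset.mem_Icc] at hy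
      rw [mem_boxN']
      omega
    · intro y hy
      rw [hTdef, Finset.mem_product, Finset.mem_singleton, Finset.mem_Icc] at hy
      rw [mem_boxN']
      simp only
      omega
    · intro y hy z hz e1 e2
      rw [hTdef, Finset.mem_product, Finset.mem_singleton, Finset.mem_Icc] at hy hz
      simp only at e1 e2
      have : z.1 = (ρ:ℤ) := hz.1
      have : z.2 = s := by omega
      exact Prod.ext hz.1 this
  apply lamStar_eq_of _ _ _ _ hlb
  set aZ : ℤ := 2*(ρ:ℤ) + 1 with haZ
  set ccZ : ℤ := aZ * (ρ:ℤ) + s with hccZ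
  refine ⟨cutCard ρ (aZ:ℝ) 1 (ccZ:ℝ), ⟨(aZ:ℝ), 1, (ccZ:ℝ), ?_, ?_, ?_, rfl⟩, ?_⟩
  · intro h; exact one_ne_zero h.2
  · have : 0 < ccZ := by nlinarith
    exact_mod_cast this
  · rw [hccZ, haZ]; push_cast; ring
  · rw [← hTcard]
    unfold cutCard
    apply Finset.card_le_card
    intro y hy
    rw [Finset.mem_filter, mem_boxN'] at hy
    obtain ⟨⟨hb1, hb2, hb3, hb4⟩, hi⟩ := hy
    have hiZ : (ccZ:ℤ) ≤ aZ * y.1 + 1 * y.2 := by exact_mod_cast hi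
    have hy1 : (ρ:ℤ) ≤ y.1 := by nlinarith
    have hy1' : y.1 = (ρ:ℤ) := by omega
    rw [hTdef, Finset.mem_product, Finset.mem_singleton, Finset.mem_Icc]
    rw [hccZ, hy1'] at hiZ
    exact ⟨hy1', by omega, hb4⟩

/-- Part (iii) witness. -/
lemma part3_lemma (ρ i : ℕ) (hρ : 1 ≤ ρ) (hi : i < ρ) :
    lamStar ρ ((ρ:ℤ) - i, 0) = ρ + 1 + i * (2 * ρ + 1) := by
  classical
  have hρz : (1:ℤ) ≤ (ρ:ℤ) := by exact_mod_cast hρ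
  have hiz : (i:ℤ) < (ρ:ℤ) := by exact_mod_cast hi
  set m : ℤ := (ρ:ℤ) - i with hm
  have hm1 : 1 ≤ m := by omega
  have hm2 : m ≤ ρ := by omega
  set T : Finset (ℤ × ℤ) :=
    ({m} ×ˢ Finset.Icc 0 (ρ:ℤ)) ∪
      (Finset.Icc (m+1) (ρ:ℤ) ×ˢ Finset.Icc (-(ρ:ℤ)) (ρ:ℤ)) with hTdef
  have hdisj : Disjoint ({m} ×ˢ Finset.Icc 0 (ρ:ℤ))
      (Finset.Icc (m+1) (ρ:ℤ) ×ˢ Finset.Icc (-(ρ:ℤ)) (ρ:ℤ)) := by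
    rw [Finset.disjoint_left]
    intro y hy hy'
    rw [Finset.mem_product, Finset.mem_singleton] at hy
    rw [Finset.mem_product, Finset.mem_Icc] at hy'
    omega
  have hTcard : T.card = ρ + 1 + i * (2 * ρ + 1) := by
    rw [hTdef, Finset.card_union_of_disjoint hdisj, Finset.card_product,
      Finset.card_product, Finset.card_singleton, Int.card_Icc, Int.card_Icc,
      Int.card_Icc]
    have e1 : ((ρ:ℤ) + 1 - 0).toNat = ρ + 1 := by omega
    have e2 : ((ρ:ℤ) + 1 - (m+1)).toNat = i := by omega
    have e3 : ((ρ:ℤ) + 1 - (-(ρ:ℤ))).toNat = 2 * ρ + 1 := by omega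
    rw [e1, e2, e3]
    ring
  have hmemT : ∀ y : ℤ × ℤ, y ∈ T ↔
      (y.1 = m ∧ 0 ≤ y.2 ∧ y.2 ≤ ρ) ∨ (m + 1 ≤ y.1 ∧ y.1 ≤ ρ ∧ -(ρ:ℤ) ≤ y.2 ∧ y.2 ≤ ρ) := by
    intro y
    rw [hTdef, Finset.mem_union, Finset.mem_product, Finset.mem_product,
      Finset.mem_singleton, Finset.mem_Icc, Finset.mem_Icc, Finset.mem_Icc]
    tauto
  have hlb : ∀ n ∈ lamSet ρ (m, 0), ρ + 1 + i * (2 * ρ + 1) ≤ n := by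
    intro n hn
    rw [← hTcard]
    apply lamSet_lb ρ (m, 0) T _ _ _ n hn
    · intro y hy
      rw [hmemT] at hy
      rw [mem_boxN']
      omega
    · intro y hy
      rw [hmemT] at hy
      rw [mem_boxN']
      simp only
      omega
    · intro y hy z hz e1 e2
      rw [hmemT] at hy hz
      simp only at e1 e2
      have hz1 : z.1 = m := by omega
      have hz2 : z.2 = 0 := by omega
      exact Prod.ext hz1 hz2
  apply lamStar_eq_of _ _ _ _ hlb
  set aZ : ℤ := 2*(ρ:ℤ) + 1 with haZ
  set ccZ : ℤ := aZ * m with hccZ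
  refine ⟨cutCard ρ (aZ:ℝ) 1 (ccZ:ℝ), ⟨(aZ:ℝ), 1, (ccZ:ℝ), ?_, ?_, ?_, rfl⟩, ?_⟩
  · intro h; exact one_ne_zero h.2
  · have : 0 < ccZ := by nlinarith
    exact_mod_cast this
  · rw [hccZ, haZ]; push_cast; ring
  · rw [← hTcard]
    unfold cutCard
    apply Finset.card_le_card
    intro y hy
    rw [Finset.mem_filter, mem_boxN'] at hy
    obtain ⟨⟨hb1, hb2, hb3, hb4⟩, hi'⟩ := hy
    have hiZ : (ccZ:ℤ) ≤ aZ * y.1 + 1 * y.2 := by exact_mod_cast hi'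
    have hy1 : m ≤ y.1 := by nlinarith
    rw [hmemT]
    by_cases hc : y.1 = m
    · left
      refine ⟨hc, ?_, hb4⟩
      rw [hccZ, hc] at hiZ
      omega
    · right; omega

theorem stmt19 (ρ : ℕ) (hρ : 1 ≤ ρ) :
    (∀ θ : ℕ, 2 * ρ ^ 2 + 1 ≤ θ → ¬ ∃ x ∈ boxN ρ, x ≠ (0, 0) ∧ lamStar ρ x = θ) ∧
    (∀ θ : ℕ, 1 ≤ θ → θ ≤ ρ → ∃ x ∈ boxN ρ, x ≠ (0, 0) ∧ lamStar ρ x = θ) ∧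
    (∀ i : ℕ, i < ρ → ∃ x ∈ boxN ρ, x ≠ (0, 0) ∧
      lamStar ρ x = ρ + 1 + i * (2 * ρ + 1)) := by
  have hρz : (1:ℤ) ≤ (ρ:ℤ) := by exact_mod_cast hρ
  refine ⟨?_, ?_, ?_⟩
  · rintro θ hθ ⟨x, hx, hne, hlam⟩
    have := lamStar_le_main ρ hρ x hx hne
    omega
  · intro θ h1 h2
    refine ⟨((ρ:ℤ), (ρ:ℤ) + 1 - θ), ?_, ?_, part2_lemma ρ θ hρ h1 h2⟩
    · rw [mem_boxN']
      have : (θ:ℤ) ≤ (ρ:ℤ) := by exact_mod_cast h2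
      simp only
      omega
    · intro h
      have : (ρ:ℤ) = 0 := congrArg Prod.fst h
      omega
  · intro i hi
    refine ⟨((ρ:ℤ) - i, 0), ?_, ?_, part3_lemma ρ i hρ hi⟩
    · rw [mem_boxN']
      have : (i:ℤ) < (ρ:ℤ) := by exact_mod_cast hi
      simp only
      omega
    · intro h
      have h1 : (ρ:ℤ) - i = 0 := congrArg Prod.fst h
      have : (i:ℤ) < (ρ:ℤ) := by exact_mod_cast hi
      omega


end
end
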